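/- Let C(z) = Σ_{n≥0} (1/(kn+1)) * binomial((k+1)n, n) * z^n be the generating function for the k-Catalan numbers. Then for positive integers j and t, the coefficient of z^t in C(z)^j equals (j/t) * binomial((k+1)t + j - 1, t - 1). -/

import Mathlib

noncomputable def fc (k j t : ℕ) : ℚ :=
  if t = 0 then 1 else (j : ℚ) / (t : ℚ) * (Nat.choose ((k + 1) * t + j - 1) (t - 1) : ℚ)

lemma fc_t0 (k j : ℕ) : fc k j 0 = 1 := by simp [fc]

lemma fc_j0 (k t : ℕ) (ht : t ≠ 0) : fc k 0 t = 0 := by simp [fc, ht]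

lemma fc_rec (k j t : ℕ) (hj : 1 ≤ j) (ht : 1 ≤ t) :
    fc k j t = fc k (j - 1) t + fc k (j + k) (t - 1) := by
  rcases Nat.lt_or_ge t 2 with h2 | h2
  · -- t = 1
    interval_cases t
    have hj' : ((j - 1 : ℕ) : ℚ) = (j : ℚ) - 1 := by
      push_cast [Nat.cast_sub hj]; ring
    simp [fc, hj', Nat.choose_zero_right]
  · -- t ≥ 2
    have ht0 : t ≠ 0 := by omega
    have ht1 : t - 1 ≠ 0 := by omega
    have hkt : (k + 1) * t = k * t + t := by ring
    set N : ℕ := (k + 1) * t + j - 1 with hN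
    have e1 : (k + 1) * t + (j - 1) - 1 = N - 1 := by omega
    have e2 : (k + 1) * (t - 1) + (j + k) - 1 = N - 1 := by
      obtain ⟨t', rfl⟩ : ∃ t', t = t' + 1 := ⟨t - 1, by omega⟩
      have h : (k + 1) * (t' + 1) = (k + 1) * t' + (k + 1) := by ring
      simp only [Nat.add_sub_cancel]
      omega
    have e3 : t - 1 - 1 = t - 2 := by omega
    have pascal : Nat.choose N (t - 1) =
        Nat.choose (N - 1) (t - 2) + Nat.choose (N - 1) (t - 1) := by
      obtain ⟨M, hM⟩ : ∃ M, N = M + 1 := ⟨N - 1, by omega⟩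
      obtain ⟨s, hs⟩ : ∃ s, t - 1 = s + 1 := ⟨t - 2, by omega⟩
      have hM1 : N - 1 = M := by omega
      have hs1 : t - 2 = s := by omega
      rw [hM, hs, Nat.choose_succ_succ]
      simp [Nat.add_sub_cancel, hs1]
    have hxy : Nat.choose (N - 1) (t - 1) * (t - 1) =
        Nat.choose (N - 1) (t - 2) * (k * t + j) := by
      have h := Nat.choose_succ_right_eq (N - 1) (t - 2)
      have ht2 : t - 2 + 1 = t - 1 := by omega
      rw [ht2] at h
      rw [h]
      congr 1
      omega
    have htQ : ((t - 1 : ℕ) : ℚ) = (t : ℚ) - 1 := by push_cast [Nat.cast_sub ht]; ring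
    have hjQ : ((j - 1 : ℕ) : ℚ) = (j : ℚ) - 1 := by push_cast [Nat.cast_sub hj]; ring
    have hxyQ : (Nat.choose (N - 1) (t - 1) : ℚ) * ((t : ℚ) - 1) =
        (Nat.choose (N - 1) (t - 2) : ℚ) * ((k : ℚ) * t + j) := by
      have h := congrArg (Nat.cast (R := ℚ)) hxy
      push_cast [Nat.cast_sub ht] at h
      linear_combination h
    simp only [fc, ht0, ht1, if_neg, e1, e2, e3, if_false]
    rw [hjQ, htQ, pascal]
    push_cast
    have hT : (t : ℚ) ≠ 0 := by exact_mod_cast ht0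
    have hT1 : (t : ℚ) - 1 ≠ 0 := by
      have : (2 : ℚ) ≤ t := by exact_mod_cast h2
      linarith
    field_simp
    linear_combination hxyQ

lemma fc_conv (k t : ℕ) : ∀ m j : ℕ,
    (∑ i ∈ Finset.range (t + 1), fc k m i * fc k j (t - i)) = fc k (m + j) t := by
  induction t using Nat.strong_induction_on with
  | _ t IH =>
    intro m j
    induction m with
    | zero =>
      rw [Finset.sum_eq_single 0]
      · simp [fc_t0]
      · intro b _ hb
        rw [fc_j0 k b hb, zero_mul]
      · intro h; simp at h
    | succ m IHm =>
      by_cases ht : t = 0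
      · subst ht; simp [fc_t0]
      · have ht1 : 1 ≤ t := Nat.one_le_iff_ne_zero.mpr ht
        rw [Finset.sum_range_succ']
        have step : ∀ i, fc k (m + 1) (i + 1) =
            fc k m (i + 1) + fc k (m + 1 + k) i := by
          intro i
          have h := fc_rec k (m + 1) (i + 1) (by omega) (by omega)
          simpa using h
        have split : (∑ i ∈ Finset.range t, fc k (m + 1) (i + 1) * fc k j (t - (i + 1)))
            = (∑ i ∈ Finset.range t, fc k m (i + 1) * fc k j (t - (i + 1)))
              + (∑ i ∈ Finset.range t, fc k (m + 1 + k) i * fc k j (t - 1 - i)) := by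
          rw [← Finset.sum_add_distrib]
          apply Finset.sum_congr rfl
          intro i _
          rw [step i]
          have h : t - (i + 1) = t - 1 - i := by omega
          rw [h]; ring
        rw [split]
        have firstsum : (∑ i ∈ Finset.range t, fc k m (i + 1) * fc k j (t - (i + 1)))
            = fc k (m + j) t - fc k m 0 * fc k j t := by
          have h := IHm
          rw [Finset.sum_range_succ'] at h
          simp only [Nat.sub_zero] at h
          linarith [h]
        have secondsum : (∑ i ∈ Finset.range t, fc k (m + 1 + k) i * fc k j (t - 1 - i))
            = fc k (m + 1 + k + j) (t - 1) := by
          have ht' : t = (t - 1) + 1 := by omega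
          rw [ht']
          exact IH (t - 1) (by omega) (m + 1 + k) j
        rw [firstsum, secondsum, fc_t0]
        have hrec := fc_rec k (m + 1 + j) t (by omega) ht1
        have e : m + 1 + j - 1 = m + j := by omega
        have e2 : m + 1 + j + k = m + 1 + k + j := by omega
        rw [e, e2] at hrec
        simp only [Nat.sub_zero, fc_t0, one_mul]
        linarith [hrec]

lemma coeff_C (k t : ℕ) :
    PowerSeries.coeff (R := ℚ) t
      (PowerSeries.mk (fun n => (Nat.choose ((k + 1) * n) n : ℚ) / (k * n + 1)))
      = fc k 1 t := by
  rw [PowerSeries.coeff_mk]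
  by_cases ht : t = 0
  · subst ht; simp [fc]
  · have ht1 : 1 ≤ t := Nat.one_le_iff_ne_zero.mpr ht
    simp only [fc, ht, if_false]
    have e : (k + 1) * t + 1 - 1 = (k + 1) * t := by omega
    rw [e]
    have key : Nat.choose ((k + 1) * t) t * t
        = Nat.choose ((k + 1) * t) (t - 1) * (k * t + 1) := by
      have h := Nat.choose_succ_right_eq ((k + 1) * t) (t - 1)
      have ht2 : (t - 1) + 1 = t := by omega
      rw [ht2] at h
      rw [h]
      congr 1
      have hkt : (k + 1) * t = k * t + t := by ring
      omega
    have keyQ : (Nat.choose ((k + 1) * t) t : ℚ) * t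
        = (Nat.choose ((k + 1) * t) (t - 1) : ℚ) * ((k : ℚ) * t + 1) := by
      exact_mod_cast congrArg (Nat.cast (R := ℚ)) key
    have hT : (t : ℚ) ≠ 0 := by exact_mod_cast ht
    have hK : (k : ℚ) * t + 1 ≠ 0 := by positivity
    field_simp
    linear_combination keyQ

lemma coeff_pow (k j t : ℕ) :
    PowerSeries.coeff (R := ℚ) t
      ((PowerSeries.mk (fun n => (Nat.choose ((k + 1) * n) n : ℚ) / (k * n + 1))) ^ j)
      = fc k j t := by
  induction j generalizing t with
  | zero =>
    rw [pow_zero]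
    by_cases ht : t = 0
    · subst ht; simp [fc_t0]
    · rw [fc_j0 k t ht]
      simp [PowerSeries.coeff_one, ht]
  | succ j IHj =>
    rw [pow_succ, PowerSeries.coeff_mul,
      Finset.Nat.sum_antidiagonal_eq_sum_range_succ_mk]
    have h : (∑ i ∈ Finset.range (t + 1),
        PowerSeries.coeff (R := ℚ) i ((PowerSeries.mk (fun n => (Nat.choose ((k + 1) * n) n : ℚ) / (k * n + 1))) ^ j)
          * PowerSeries.coeff (R := ℚ) (t - i) (PowerSeries.mk (fun n => (Nat.choose ((k + 1) * n) n : ℚ) / (k * n + 1))))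
        = ∑ i ∈ Finset.range (t + 1), fc k j i * fc k 1 (t - i) := by
      apply Finset.sum_congr rfl
      intro i _
      rw [IHj, coeff_C]
    rw [h, fc_conv]

theorem stmt3 (k j t : ℕ) (hj : 0 < j) (ht : 0 < t) :
    PowerSeries.coeff (R := ℚ) t
        ((PowerSeries.mk (fun n => (Nat.choose ((k + 1) * n) n : ℚ) / (k * n + 1))) ^ j)
      = (j : ℚ) / (t : ℚ) * (Nat.choose ((k + 1) * t + j - 1) (t - 1) : ℚ) := by
  rw [coeff_pow]
  simp [fc, Nat.pos_iff_ne_zero.mp ht]
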